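/- There exists a Schwartz function ψ on ℝ whose Fourier transform is supported in [-2,-1/2] ∪ [1/2,2] such that for every Schwartz function g on ℝ, g(0) = ∑_{j ∈ ℤ} 2^{-j} ∫_ℝ ψ(2^{-j} x) g(x) dx, with the sum converging. -/

import Mathlib

open MeasureTheory Set
open scoped FourierTransform

namespace DyadicAux

lemma expNegInvGlue_mono : Monotone expNegInvGlue := by
  intro x y h
  rcases le_or_gt x 0 with hx | hx
  · rw [expNegInvGlue.zero_of_nonpos hx]; exact expNegInvGlue.nonneg y
  · have hy : 0 < y := hx.trans_le h
    unfold expNegInvGlue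
    rw [if_neg (not_le.2 hx), if_neg (not_le.2 hy)]
    apply Real.exp_le_exp.2
    have : y⁻¹ ≤ x⁻¹ := inv_anti₀ hx h
    linarith

lemma smoothTransition_mono : Monotone Real.smoothTransition := by
  intro x y h
  unfold Real.smoothTransition
  rw [div_le_div_iff₀ (Real.smoothTransition.pos_denom x) (Real.smoothTransition.pos_denom y)]
  have h1 : expNegInvGlue x ≤ expNegInvGlue y := expNegInvGlue_mono h
  have h2 : expNegInvGlue (1 - y) ≤ expNegInvGlue (1 - x) := expNegInvGlue_mono (by linarith)
  have h3 := expNegInvGlue.nonneg x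
  have h4 := expNegInvGlue.nonneg (1 - y)
  nlinarith

noncomputable def Hfun (ξ : ℝ) : ℝ := Real.smoothTransition ((4 * ξ ^ 2 - 1) / 3)

lemma Hfun_contDiff : ContDiff ℝ (⊤ : ℕ∞) Hfun := by
  have h : ContDiff ℝ (⊤ : ℕ∞) (fun ξ : ℝ => (4 * ξ ^ 2 - 1) / 3) :=
    ((contDiff_const.mul (contDiff_id.pow 2)).sub contDiff_const).div_const 3
  exact Real.smoothTransition.contDiff.comp h

lemma Hfun_zero {ξ : ℝ} (h : |ξ| ≤ 1 / 2) : Hfun ξ = 0 := by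
  apply Real.smoothTransition.zero_of_nonpos
  have h2 : ξ ^ 2 ≤ (1 / 2) ^ 2 := by
    rw [← sq_abs]
    exact pow_le_pow_left₀ (abs_nonneg ξ) h 2
  nlinarith

lemma Hfun_one {ξ : ℝ} (h : 1 ≤ |ξ|) : Hfun ξ = 1 := by
  apply Real.smoothTransition.one_of_one_le
  have h2 : (1 : ℝ) ≤ ξ ^ 2 := by
    rw [← sq_abs]
    nlinarith [abs_nonneg ξ]
  nlinarith

lemma Hfun_le {a b : ℝ} (h : a ^ 2 ≤ b ^ 2) : Hfun a ≤ Hfun b := by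
  apply smoothTransition_mono
  nlinarith

noncomputable def chi (ξ : ℝ) : ℝ := Hfun ξ - Hfun (ξ / 2)

lemma chi_contDiff : ContDiff ℝ (⊤ : ℕ∞) chi :=
  Hfun_contDiff.sub (Hfun_contDiff.comp (contDiff_id.div_const 2))

lemma chi_nonneg (ξ : ℝ) : 0 ≤ chi ξ := by
  apply sub_nonneg.2
  apply Hfun_le
  nlinarith [sq_nonneg ξ]

lemma chi_zero_low {ξ : ℝ} (h : |ξ| ≤ 1 / 2) : chi ξ = 0 := by
  have h2 : |ξ / 2| ≤ 1 / 2 := by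
    rw [abs_div, abs_two]
    linarith [abs_nonneg ξ]
  unfold chi
  rw [Hfun_zero h, Hfun_zero h2, sub_zero]

lemma chi_zero_high {ξ : ℝ} (h : 2 ≤ |ξ|) : chi ξ = 0 := by
  have h2 : 1 ≤ |ξ / 2| := by
    rw [abs_div, abs_two]
    linarith
  unfold chi
  rw [Hfun_one (by linarith), Hfun_one h2, sub_self]

lemma chi_support {ξ : ℝ} (h : chi ξ ≠ 0) : ξ ∈ Icc (-2 : ℝ) (-(1/2)) ∪ Icc (1/2 : ℝ) 2 := by
  by_contra hmem
  apply h
  rcases le_or_gt (|ξ|) (1/2) with h1 | h1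
  · exact chi_zero_low h1
  rcases le_or_gt 2 (|ξ|) with h2 | h2
  · exact chi_zero_high h2
  · exfalso
    apply hmem
    rcases abs_cases ξ with ⟨he, _⟩ | ⟨he, _⟩
    · right; constructor <;> linarith
    · left; constructor <;> linarith

lemma chi_hasCompactSupport : HasCompactSupport chi := by
  apply HasCompactSupport.intro (isCompact_Icc (a := (-2:ℝ)) (b := 2))
  intro x hx
  simp only [mem_Icc, not_and_or, not_le] at hx
  apply chi_zero_high
  rcases hx with hx | hx
  · rw [le_abs]; right; linarith
  · rw [le_abs]; left; linarith

lemma Icc_succ_int (a b : ℤ) (h : a ≤ b + 1) :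
    Finset.Icc a (b + 1) = insert (b + 1) (Finset.Icc a b) := by
  ext x
  simp only [Finset.mem_Icc, Finset.mem_insert]
  omega

lemma telescope (F : ℤ → ℝ) (a : ℤ) : ∀ b : ℤ, a ≤ b →
    ∑ j ∈ Finset.Icc a b, (F j - F (j - 1)) = F b - F (a - 1) := by
  refine Int.le_induction ?_ ?_
  · simp
  · intro k hk ih
    rw [Icc_succ_int a k (by omega), Finset.sum_insert (by simp), ih]
    ring

lemma chi_eq_F (ξ : ℝ) (j : ℤ) :
    chi ((2:ℝ) ^ j * ξ) = Hfun ((2:ℝ) ^ j * ξ) - Hfun ((2:ℝ) ^ (j - 1) * ξ) := by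
  unfold chi
  congr 2
  rw [zpow_sub₀ (two_ne_zero)]
  ring

lemma hasSum_chi {ξ : ℝ} (hξ : ξ ≠ 0) : HasSum (fun j : ℤ => chi ((2:ℝ) ^ j * ξ)) 1 := by
  have hr : 0 < |ξ| := abs_pos.2 hξ
  obtain ⟨n, hn⟩ := pow_unbounded_of_one_lt (|ξ|⁻¹) (one_lt_two (α := ℝ))
  obtain ⟨m, hm⟩ := pow_unbounded_of_one_lt (|ξ|) (one_lt_two (α := ℝ))
  set j0 : ℤ := -(m : ℤ) with hj0def
  set j1 : ℤ := (n : ℤ) with hj1def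
  have hj0 : (2:ℝ) ^ (j0 : ℤ) * |ξ| ≤ 1 := by
    rw [hj0def, zpow_neg, zpow_natCast, inv_mul_le_iff₀ (by positivity), mul_one]
    exact hm.le
  have hj1 : 1 ≤ (2:ℝ) ^ (j1 : ℤ) * |ξ| := by
    rw [hj1def, zpow_natCast]
    calc (1:ℝ) = |ξ|⁻¹ * |ξ| := (inv_mul_cancel₀ hr.ne').symm
      _ ≤ 2 ^ n * |ξ| := mul_le_mul_of_nonneg_right hn.le (abs_nonneg ξ)
  have hj0le : j0 ≤ j1 := by omega
  have hmono : ∀ {i j : ℤ}, i ≤ j → (2:ℝ) ^ i * |ξ| ≤ 2 ^ j * |ξ| :=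
    fun h => mul_le_mul_of_nonneg_right (zpow_le_zpow_right₀ one_le_two h) (abs_nonneg ξ)
  have habs : ∀ j : ℤ, |(2:ℝ) ^ j * ξ| = 2 ^ j * |ξ| := fun j => by
    rw [abs_mul, abs_of_pos (zpow_pos two_pos j)]
  have hhalf : (2:ℝ) ^ (j0 - 1) * |ξ| = (2 ^ j0 * |ξ|) / 2 := by
    rw [zpow_sub₀ two_ne_zero]; ring
  have hvanish : ∀ j ∉ Finset.Icc j0 j1, chi ((2:ℝ) ^ j * ξ) = 0 := by
    intro j hj
    simp only [Finset.mem_Icc, not_and_or, not_le] at hj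
    rcases hj with hj | hj
    · apply chi_zero_low
      rw [habs]
      calc (2:ℝ) ^ j * |ξ| ≤ 2 ^ (j0 - 1) * |ξ| := hmono (by omega)
        _ = (2 ^ j0 * |ξ|) / 2 := hhalf
        _ ≤ 1 / 2 := by linarith
    · apply chi_zero_high
      rw [habs]
      calc (2:ℝ) = 2 * 1 := by ring
        _ ≤ 2 * (2 ^ j1 * |ξ|) := by linarith
        _ = 2 ^ (j1 + 1) * |ξ| := by rw [zpow_add₀ two_ne_zero]; ring
        _ ≤ 2 ^ j * |ξ| := hmono (by omega)
  have hsum : ∑ j ∈ Finset.Icc j0 j1, chi ((2:ℝ) ^ j * ξ) = 1 := by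
    rw [Finset.sum_congr rfl (fun j _ => chi_eq_F ξ j),
      telescope (fun j => Hfun ((2:ℝ) ^ j * ξ)) j0 j1 hj0le]
    have e1 : Hfun ((2:ℝ) ^ j1 * ξ) = 1 := Hfun_one (by rw [habs]; exact hj1)
    have e0 : Hfun ((2:ℝ) ^ (j0 - 1) * ξ) = 0 := Hfun_zero (by rw [habs, hhalf]; linarith)
    rw [e1, e0, sub_zero]
  exact hsum ▸ hasSum_sum_of_ne_finset_zero hvanish


lemma schwartz_decay_of_compact {f : ℝ → ℂ} (hf : ContDiff ℝ (⊤ : ℕ∞) f)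
    (h2 : HasCompactSupport f) (k n : ℕ) :
    ∃ C, ∀ x : ℝ, ‖x‖ ^ k * ‖iteratedFDeriv ℝ n f x‖ ≤ C := by
  have hcont : Continuous fun x : ℝ => ‖x‖ ^ k * ‖iteratedFDeriv ℝ n f x‖ :=
    (continuous_norm.pow k).mul (hf.continuous_iteratedFDeriv (mod_cast le_top)).norm
  have hsupp : HasCompactSupport fun x : ℝ => ‖x‖ ^ k * ‖iteratedFDeriv ℝ n f x‖ := by
    apply HasCompactSupport.intro h2
    intro x hx
    have h0 : iteratedFDeriv ℝ n f x = 0 := by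
      by_contra h
      exact hx (support_iteratedFDeriv_subset n (by simpa [Function.mem_support] using h))
    rw [h0]
    simp
  obtain ⟨C, hC⟩ := hcont.bounded_above_of_compact_support hsupp
  refine ⟨C, fun x => ?_⟩
  have := hC x
  rw [Real.norm_eq_abs] at this
  exact (le_abs_self _).trans this

noncomputable def chiS : SchwartzMap ℝ ℂ :=
  { toFun := fun ξ => (chi ξ : ℂ)
    smooth' := Complex.ofRealCLM.contDiff.comp chi_contDiff
    decay' := schwartz_decay_of_compact
      (Complex.ofRealCLM.contDiff.comp chi_contDiff)
      (chi_hasCompactSupport.comp_left (g := (Complex.ofReal : ℝ → ℂ)) (by simp)) }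

lemma chiS_apply (ξ : ℝ) : chiS ξ = (chi ξ : ℂ) := rfl

lemma fourier_scale (f : ℝ → ℂ) {c : ℝ} (hc : 0 < c) (x : ℝ) :
    𝓕 (fun v => f (c * v)) x = (c⁻¹ : ℝ) • 𝓕 f (c⁻¹ * x) := by
  rw [Real.fourier_real_eq, Real.fourier_real_eq]
  have key : ∀ v : ℝ, 𝐞 (-(v * x)) • f (c * v)
      = (fun w => 𝐞 (-(w * (c⁻¹ * x))) • f w) (c * v) := by
    intro v
    simp only
    congr 3
    field_simp
  simp_rw [key]
  rw [MeasureTheory.Measure.integral_comp_mul_left (fun w => 𝐞 (-(w * (c⁻¹ * x))) • f w) c,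
    abs_of_pos (inv_pos.2 hc)]


lemma innerlr_flip : (innerₗ ℝ).flip = innerₗ ℝ := by
  apply LinearMap.ext; intro x; apply LinearMap.ext; intro y
  simp [real_inner_comm]

lemma mult_formula {f g : ℝ → ℂ} (hf : Integrable f) (hg : Integrable g) :
    ∫ ξ, 𝓕 f ξ * g ξ = ∫ x, f x * 𝓕 g x := by
  have hL : Continuous fun p : ℝ × ℝ => innerₗ ℝ p.1 p.2 := by
    simp only [innerₗ_apply_apply]
    exact continuous_inner
  have h := VectorFourier.integral_fourierIntegral_smul_eq_flip (e := Real.fourierChar)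
    (L := innerₗ ℝ) (μ := volume) (ν := volume)
    Real.continuous_fourierChar hL hf hg
  rw [innerlr_flip] at h
  simp only [smul_eq_mul] at h
  exact h

lemma chiC_integrable : Integrable (fun x : ℝ => (chi x : ℂ)) := chiS.integrable

lemma fourier_chiC_eq : 𝓕 (fun x : ℝ => (chi x : ℂ))
    = ⇑(SchwartzMap.fourierTransformCLM ℝ chiS) :=
  (SchwartzMap.fourier_coe chiS).symm

lemma fourier_fourier_chiC (ξ : ℝ) :
    𝓕 (𝓕 (fun x : ℝ => (chi x : ℂ))) ξ = (chi (-ξ) : ℂ) := by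
  have hint2 : Integrable (𝓕 fun x : ℝ => (chi x : ℂ)) := by
    rw [fourier_chiC_eq]
    exact SchwartzMap.integrable _
  have h := Continuous.fourierInv_fourier_eq (f := fun x : ℝ => (chi x : ℂ))
    (Complex.continuous_ofReal.comp chi_contDiff.continuous) chiC_integrable hint2
  calc 𝓕 (𝓕 fun x : ℝ => (chi x : ℂ)) ξ
      = 𝓕⁻ (𝓕 fun x : ℝ => (chi x : ℂ)) (-ξ) := by
        rw [Real.fourierInv_eq_fourier_neg, neg_neg]
    _ = (chi (-ξ) : ℂ) := by rw [h]

lemma fourier_g_integrable (g : SchwartzMap ℝ ℂ) : Integrable (𝓕 ⇑g) := by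
  rw [← SchwartzMap.fourier_coe g]
  exact SchwartzMap.integrable _

lemma fourier_g_continuous (g : SchwartzMap ℝ ℂ) : Continuous (𝓕 ⇑g) := by
  rw [← SchwartzMap.fourier_coe g]
  exact SchwartzMap.continuous _

lemma g_zero_eq (g : SchwartzMap ℝ ℂ) : g 0 = ∫ ξ, 𝓕 (⇑g) ξ := by
  have h2 := Continuous.fourierInv_fourier_eq (f := ⇑g) g.continuous g.integrable
    (fourier_g_integrable g)
  conv_lhs => rw [← h2]
  rw [Real.fourierInv_eq]
  simp


lemma chi_scaled_integrable (c : ℝ) (hc : 0 < c) :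
    Integrable (fun v : ℝ => (chi (c * v) : ℂ)) := by
  apply Continuous.integrable_of_hasCompactSupport
  · exact Complex.continuous_ofReal.comp
      (chi_contDiff.continuous.comp (continuous_const.mul continuous_id))
  · apply HasCompactSupport.intro (isCompact_Icc (a := -(2/c)) (b := 2/c))
    intro x hx
    simp only [mem_Icc, not_and_or, not_le] at hx
    have h2 : 2 ≤ |c * x| := by
      have habs : 2 / c < |x| := by
        rcases hx with hx | hx
        · rw [abs_of_neg (by nlinarith [div_pos two_pos hc])]
          linarith
        · rw [abs_of_pos (by nlinarith [div_pos two_pos hc])]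
          exact hx
      have h3 := (div_lt_iff₀ hc).1 habs
      rw [abs_mul, abs_of_pos hc]
      nlinarith
    simp [chi_zero_high h2]

lemma term_eq (g : SchwartzMap ℝ ℂ) (j : ℤ) :
    (2:ℂ) ^ (-j) * ∫ x : ℝ, (SchwartzMap.fourierTransformCLM ℝ chiS) ((2:ℝ) ^ (-j) * x) * g x
      = ∫ ξ : ℝ, (chi ((2:ℝ) ^ j * ξ) : ℂ) * 𝓕 (⇑g) ξ := by
  set c : ℝ := (2:ℝ) ^ j with hcdef
  have hc : 0 < c := zpow_pos two_pos j
  have hcinv : (2:ℝ) ^ (-j) = c⁻¹ := by rw [hcdef, zpow_neg]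
  have hscale := fun x => fourier_scale (fun v : ℝ => (chi v : ℂ)) hc x
  have hmf := mult_formula (f := fun v : ℝ => (chi (c * v) : ℂ)) (g := ⇑g)
    (chi_scaled_integrable c hc) g.integrable
  rw [← hmf]
  have hlhs : ∀ x : ℝ, 𝓕 (fun v : ℝ => (chi (c * v) : ℂ)) x * g x
      = (c⁻¹ : ℂ) * ((SchwartzMap.fourierTransformCLM ℝ chiS) (c⁻¹ * x) * g x) := by
    intro x
    rw [hscale x, ← fourier_chiC_eq]
    rw [Complex.real_smul]
    push_cast
    ring
  simp_rw [hlhs]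
  rw [MeasureTheory.integral_const_mul, hcinv]
  congr 1
  rw [hcdef, show (((((2:ℝ) ^ j : ℝ))) : ℂ) = ((2:ℝ) : ℂ) ^ j from Complex.ofReal_zpow 2 j]
  rw [← zpow_neg]
  norm_num

theorem delta_dyadic_decomposition' :
    ∃ ψ : SchwartzMap ℝ ℂ,
      (Function.support (𝓕 (⇑ψ)) ⊆ Icc (-2 : ℝ) (-(1/2)) ∪ Icc (1/2 : ℝ) 2) ∧
      ∀ g : SchwartzMap ℝ ℂ,
        HasSum (fun j : ℤ => (2 : ℂ) ^ (-j) * ∫ x : ℝ, ψ ((2 : ℝ) ^ (-j) * x) * g x) (g 0) := by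
  refine ⟨SchwartzMap.fourierTransformCLM ℝ chiS, ?_, ?_⟩
  · intro ξ hξ
    rw [Function.mem_support, ← fourier_chiC_eq, fourier_fourier_chiC] at hξ
    have h : chi (-ξ) ≠ 0 := by
      intro h0
      exact hξ (by rw [h0]; simp)
    have := chi_support h
    rcases this with h1 | h1
    · rw [mem_Icc] at h1
      right; rw [mem_Icc]; constructor <;> linarith [h1.1, h1.2]
    · rw [mem_Icc] at h1
      left; rw [mem_Icc]; constructor <;> linarith [h1.1, h1.2]
  · intro g
    have heq : (fun j : ℤ =>
        (2:ℂ) ^ (-j) * ∫ x : ℝ, (SchwartzMap.fourierTransformCLM ℝ chiS) ((2:ℝ) ^ (-j) * x) * g x)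
        = fun j : ℤ => ∫ ξ : ℝ, (chi ((2:ℝ) ^ j * ξ) : ℂ) * 𝓕 (⇑g) ξ := funext (term_eq g)
    rw [heq, g_zero_eq g]
    have hae : ∀ᵐ ξ : ℝ, ξ ≠ (0:ℝ) := by
      rw [ae_iff]
      simp only [ne_eq, not_not]
      have hset : {a : ℝ | a = 0} = {(0:ℝ)} := by ext a; simp
      rw [hset]
      exact measure_singleton 0
    apply MeasureTheory.hasSum_integral_of_dominated_convergence
      (bound := fun (j : ℤ) (ξ : ℝ) => chi ((2:ℝ) ^ j * ξ) * ‖𝓕 (⇑g) ξ‖)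
    · intro j
      apply Continuous.aestronglyMeasurable
      exact (Complex.continuous_ofReal.comp
        (chi_contDiff.continuous.comp (continuous_const.mul continuous_id))).mul
        (fourier_g_continuous g)
    · intro j
      filter_upwards with ξ
      rw [norm_mul, Complex.norm_real, Real.norm_eq_abs, abs_of_nonneg (chi_nonneg _)]
    · filter_upwards [hae] with ξ hξ
      exact ((hasSum_chi hξ).mul_right _).summable
    · apply (fourier_g_integrable g).norm.congr
      filter_upwards [hae] with ξ hξ
      exact (((hasSum_chi hξ).mul_right ‖𝓕 (⇑g) ξ‖).tsum_eq.trans (one_mul _)).symm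
    · filter_upwards [hae] with ξ hξ
      have h1 := ((hasSum_chi hξ).mapL Complex.ofRealCLM).mul_right (𝓕 (⇑g) ξ)
      simpa using h1

end DyadicAux


/-- There exists a Schwartz function `ψ` on `ℝ` whose Fourier transform is supported in
`[-2,-1/2] ∪ [1/2,2]` such that for every Schwartz function `g`,
`g 0 = ∑_{j ∈ ℤ} 2^{-j} ∫ ψ(2^{-j} x) g x dx`. -/
theorem delta_dyadic_decomposition :
    ∃ ψ : SchwartzMap ℝ ℂ,
      (Function.support (𝓕 (⇑ψ)) ⊆ Icc (-2 : ℝ) (-(1/2)) ∪ Icc (1/2 : ℝ) 2) ∧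
      ∀ g : SchwartzMap ℝ ℂ,
        HasSum (fun j : ℤ => (2 : ℂ) ^ (-j) * ∫ x : ℝ, ψ ((2 : ℝ) ^ (-j) * x) * g x) (g 0) := by
  exact DyadicAux.delta_dyadic_decomposition'
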